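/- If A is a right strongly semiprime ring, then A is a right non-singular semiprime ring which does not contain an infinite direct sum of nonzero two-sided ideals. -/

import Mathlib

open MulOpposite

namespace TugPaper

universe u v

/-- A submodule `N` of `M` is essential if it intersects every nonzero submodule nontrivially. -/
def IsEssentialSubmodule {R : Type*} {M : Type*} [Ring R] [AddCommGroup M] [Module R M]
    (N : Submodule R M) : Prop :=
  ∀ Z : Submodule R M, Z ≠ ⊥ → N ⊓ Z ≠ ⊥

/-- The right annihilator `r(x) = {a : A | x·a = 0}` of an element `x` of a right `A`-module,
as a right ideal of `A` (i.e. a submodule of `A` viewed as a right module over itself). -/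
def rAnn (A : Type*) [Ring A] {M : Type*} [AddCommGroup M] [Module Aᵐᵒᵖ M] (x : M) :
    Submodule Aᵐᵒᵖ A where
  carrier := {a : A | op a • x = 0}
  zero_mem' := by simp
  add_mem' := by
    intro a b ha hb
    simp only [Set.mem_setOf_eq] at *
    rw [op_add, add_smul, ha, hb, add_zero]
  smul_mem' := by
    intro c a ha
    simp only [Set.mem_setOf_eq] at *
    have : (c • a : A) = a * c.unop := rfl
    rw [this]
    have h2 : op (a * c.unop) = op c.unop * op a := by simp
    rw [h2, mul_smul, ha, smul_zero]

/-- A right `A`-module `M` is non-singular if its singular submodule is zero, i.e. the only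
element whose right annihilator is an essential right ideal is `0`. -/
def IsNonsingular (A : Type*) [Ring A] (M : Type*) [AddCommGroup M] [Module Aᵐᵒᵖ M] : Prop :=
  ∀ x : M, IsEssentialSubmodule (rAnn A x) → x = 0

/-- The Goldie radical of a right `A`-module `M`: the intersection of all submodules `Y`
such that `M/Y` is non-singular. -/
def goldieRadical (A : Type*) [Ring A] (M : Type*) [AddCommGroup M] [Module Aᵐᵒᵖ M] :
    Submodule Aᵐᵒᵖ M :=
  sInf {Y : Submodule Aᵐᵒᵖ M | IsNonsingular A (M ⧸ Y)}

/-- A right `A`-module `M` is automorphism-invariant: for every injective module `Q`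
containing (a copy of) `M` as an essential submodule, every automorphism of `Q` maps `M`
into `M`. -/
def AutomorphismInvariant (A : Type u) [Ring A] (M : Type v) [AddCommGroup M]
    [Module Aᵐᵒᵖ M] : Prop :=
  ∀ (Q : Type v) [AddCommGroup Q] [Module Aᵐᵒᵖ Q], Module.Injective Aᵐᵒᵖ Q →
    ∀ i : M →ₗ[Aᵐᵒᵖ] Q, Function.Injective i →
      IsEssentialSubmodule (LinearMap.range i) →
        ∀ g : Q ≃ₗ[Aᵐᵒᵖ] Q, ∀ m : M, ∃ m' : M, g (i m) = i m'

/-- A module `M` is quasi-injective if every homomorphism from a submodule of `M` into `M`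
extends to an endomorphism of `M`. -/
def QuasiInjective (A : Type*) [Ring A] (M : Type*) [AddCommGroup M] [Module Aᵐᵒᵖ M] : Prop :=
  ∀ (N : Submodule Aᵐᵒᵖ M) (f : N →ₗ[Aᵐᵒᵖ] M), ∃ g : M →ₗ[Aᵐᵒᵖ] M, ∀ n : N, g n = f n

/-- A right ideal of `A` is two-sided if it is also closed under left multiplication. -/
def IsTwoSided (A : Type*) [Ring A] (I : Submodule Aᵐᵒᵖ A) : Prop :=
  ∀ a : A, ∀ x ∈ I, a * x ∈ I

/-- A ring `A` is right strongly semiprime if every two-sided ideal of `A` which is essential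
as a right ideal contains a finite subset with zero right annihilator. -/
def RightStronglySemiprime (A : Type*) [Ring A] : Prop :=
  ∀ I : Submodule Aᵐᵒᵖ A, IsTwoSided A I → IsEssentialSubmodule I →
    ∃ S : Finset A, (S : Set A) ⊆ (I : Set A) ∧ ∀ a : A, (∀ s ∈ S, s * a = 0) → a = 0

/-- A ring is semiprime if it has no nonzero two-sided ideal with zero square. -/
def SemiprimeRing (A : Type*) [Ring A] : Prop :=
  ∀ I : Submodule Aᵐᵒᵖ A, IsTwoSided A I → (∀ x ∈ I, ∀ y ∈ I, x * y = 0) → I = ⊥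

/-- The ring `A` does not contain an infinite direct sum of nonzero two-sided ideals. -/
def NoInfiniteIdealDirectSum (A : Type*) [Ring A] : Prop :=
  ¬ ∃ I : ℕ → Submodule Aᵐᵒᵖ A,
      (∀ n, IsTwoSided A (I n)) ∧ (∀ n, I n ≠ ⊥) ∧
        ∀ n, I n ⊓ (⨆ m ∈ {m : ℕ | m ≠ n}, I m) = ⊥

/-- A module is square-free if it does not contain a direct sum of two nonzero isomorphic
submodules. -/
def SquareFreeModule (A : Type*) [Ring A] (M : Type*) [AddCommGroup M] [Module Aᵐᵒᵖ M] : Prop :=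
  ¬ ∃ D₁ D₂ : Submodule Aᵐᵒᵖ M,
      D₁ ≠ ⊥ ∧ D₂ ≠ ⊥ ∧ D₁ ⊓ D₂ = ⊥ ∧ Nonempty (D₁ ≃ₗ[Aᵐᵒᵖ] D₂)

/-- A module is uniform if any two nonzero submodules have nonzero intersection. -/
def UniformModule (A : Type*) [Ring A] (M : Type*) [AddCommGroup M] [Module Aᵐᵒᵖ M] : Prop :=
  ∀ N₁ N₂ : Submodule Aᵐᵒᵖ M, N₁ ≠ ⊥ → N₂ ≠ ⊥ → N₁ ⊓ N₂ ≠ ⊥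

/-- `N` is an essential submodule of `P` (both submodules of an ambient module). -/
def EssentialIn {R : Type*} {M : Type*} [Ring R] [AddCommGroup M] [Module R M]
    (N P : Submodule R M) : Prop :=
  N ≤ P ∧ ∀ Z : Submodule R M, Z ≤ P → Z ≠ ⊥ → N ⊓ Z ≠ ⊥

/-- A submodule is closed if it has no proper essential extension inside the ambient module. -/
def ClosedSubmodule {R : Type*} {M : Type*} [Ring R] [AddCommGroup M] [Module R M]
    (N : Submodule R M) : Prop :=
  ∀ P : Submodule R M, EssentialIn N P → N = P

/-- A module is CS if every closed submodule is a direct summand. -/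
def CSModule (A : Type*) [Ring A] (M : Type*) [AddCommGroup M] [Module Aᵐᵒᵖ M] : Prop :=
  ∀ N : Submodule Aᵐᵒᵖ M, ClosedSubmodule N → ∃ P : Submodule Aᵐᵒᵖ M, IsCompl N P

/-- `X` is injective relative to `Y` (`Y`-injective): every homomorphism from a submodule of `Y`
into `X` extends to a homomorphism `Y → X`. -/
def RelativelyInjective (R : Type*) [Ring R] (Y X : Type*) [AddCommGroup Y] [Module R Y]
    [AddCommGroup X] [Module R X] : Prop :=
  ∀ (N : Submodule R Y) (f : N →ₗ[R] X), ∃ g : Y →ₗ[R] X, ∀ n : N, g n = f n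



section Lemma26

variable {A : Type u} [Ring A]

lemma mem_rAnn {x a : A} : a ∈ rAnn A x ↔ x * a = 0 := by
  change op a • x = 0 ↔ _
  rw [op_smul_eq_mul]

lemma ess_top : IsEssentialSubmodule (⊤ : Submodule Aᵐᵒᵖ A) := by
  intro Z hZ
  simpa using hZ

lemma ess_mono {E F : Submodule Aᵐᵒᵖ A} (h : E ≤ F) (hE : IsEssentialSubmodule E) :
    IsEssentialSubmodule F := fun Z hZ h2 =>
  hE Z hZ (eq_bot_iff.2 (h2 ▸ inf_le_inf_right Z h))

lemma ess_inf {E F : Submodule Aᵐᵒᵖ A} (hE : IsEssentialSubmodule E)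
    (hF : IsEssentialSubmodule F) : IsEssentialSubmodule (E ⊓ F) := by
  intro Z hZ
  have h1 : F ⊓ Z ≠ ⊥ := hF Z hZ
  have h2 := hE _ h1
  rwa [← inf_assoc] at h2

lemma ess_finsetInf {ι : Type*} (S : Finset ι) (f : ι → Submodule Aᵐᵒᵖ A)
    (h : ∀ s ∈ S, IsEssentialSubmodule (f s)) :
    IsEssentialSubmodule (S.inf f) := by
  classical
  induction S using Finset.induction_on with
  | empty => simpa [Finset.inf_empty] using (ess_top (A := A))
  | @insert a s ha ih =>
    rw [Finset.inf_insert]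
    exact ess_inf (h a (Finset.mem_insert_self a s))
      (ih (fun x hx => h x (Finset.mem_insert_of_mem hx)))

/-- The left annihilator of a two-sided ideal, as a right ideal. -/
def lAnn (I : Submodule Aᵐᵒᵖ A) (hI : IsTwoSided A I) : Submodule Aᵐᵒᵖ A where
  carrier := {a : A | ∀ x ∈ I, a * x = 0}
  zero_mem' := fun x _ => zero_mul x
  add_mem' := by
    intro a b ha hb x hx
    rw [add_mul, ha x hx, hb x hx, add_zero]
  smul_mem' := by
    intro c a ha x hx
    have h1 : (c • a : A) = a * c.unop := rfl
    rw [h1, mul_assoc]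
    exact ha _ (hI c.unop x hx)

lemma mem_lAnn {I : Submodule Aᵐᵒᵖ A} {hI : IsTwoSided A I} {a : A} :
    a ∈ lAnn I hI ↔ ∀ x ∈ I, a * x = 0 := Iff.rfl

lemma isTwoSided_lAnn (I : Submodule Aᵐᵒᵖ A) (hI : IsTwoSided A I) :
    IsTwoSided A (lAnn I hI) := by
  intro a x hx y hy
  rw [mul_assoc]
  rw [mem_lAnn.1 hx y hy, mul_zero]

lemma isTwoSided_sup {I J : Submodule Aᵐᵒᵖ A} (hI : IsTwoSided A I) (hJ : IsTwoSided A J) :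
    IsTwoSided A (I ⊔ J) := by
  intro a x hx
  rcases Submodule.mem_sup.1 hx with ⟨y, hy, z, hz, rfl⟩
  rw [mul_add]
  exact Submodule.add_mem _ (Submodule.mem_sup_left (hI a y hy))
    (Submodule.mem_sup_right (hJ a z hz))

lemma ess_sup_lAnn (I : Submodule Aᵐᵒᵖ A) (hI : IsTwoSided A I) :
    IsEssentialSubmodule (I ⊔ lAnn I hI) := by
  intro C hC hbot
  by_cases h : ∀ c ∈ C, ∀ x ∈ I, c * x = 0
  · rcases (Submodule.ne_bot_iff C).1 hC with ⟨c, hcC, hc0⟩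
    apply hc0
    have hmem : c ∈ (I ⊔ lAnn I hI) ⊓ C :=
      ⟨Submodule.mem_sup_right (fun x hx => h c hcC x hx), hcC⟩
    rw [hbot] at hmem
    simpa using hmem
  · push_neg at h
    obtain ⟨c, hcC, x, hxI, hcx⟩ := h
    apply hcx
    have h1 : c * x ∈ I := hI c x hxI
    have h2 : c * x ∈ C := by
      have h3 := C.smul_mem (op x) hcC
      rwa [op_smul_eq_mul] at h3
    have hmem : c * x ∈ (I ⊔ lAnn I hI) ⊓ C := ⟨Submodule.mem_sup_left h1, h2⟩
    rw [hbot] at hmem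
    simpa using hmem

lemma semiprime_of_ssp (hssp : RightStronglySemiprime A) : SemiprimeRing A := by
  intro I hI hsq
  rw [Submodule.eq_bot_iff]
  intro y hy
  obtain ⟨S, hSsub, hSann⟩ :=
    hssp _ (isTwoSided_sup hI (isTwoSided_lAnn I hI)) (ess_sup_lAnn I hI)
  apply hSann
  intro s hs
  have hsJ : s ∈ I ⊔ lAnn I hI := hSsub (Finset.mem_coe.2 hs)
  rcases Submodule.mem_sup.1 hsJ with ⟨z, hz, b, hb, rfl⟩
  rw [add_mul, hsq z hz y hy, mem_lAnn.1 hb y hy, add_zero]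

lemma nil_right_ideal_bot (hsp : SemiprimeRing A) (D : Submodule Aᵐᵒᵖ A)
    (hD : ∀ x ∈ D, ∀ y ∈ D, x * y = 0) : D = ⊥ := by
  set U : Set A := {y | ∃ a : A, ∃ d ∈ D, y = a * d} with hU
  set T := Submodule.span Aᵐᵒᵖ U with hT
  have hUmul : ∀ b : A, ∀ u ∈ U, b * u ∈ U := by
    rintro b u ⟨a, d, hd, rfl⟩
    exact ⟨b * a, d, hd, (mul_assoc _ _ _).symm⟩
  have hTtwo : IsTwoSided A T := by
    intro b x hx
    induction hx using Submodule.span_induction with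
    | mem u hu => exact Submodule.subset_span (hUmul b u hu)
    | zero => rw [mul_zero]; exact T.zero_mem
    | add x y _ _ hx hy => rw [mul_add]; exact T.add_mem hx hy
    | smul c x _ hx =>
      rw [← op_unop c, op_smul_eq_mul, ← mul_assoc, ← op_smul_eq_mul]
      exact T.smul_mem _ hx
  have hgen : ∀ u ∈ U, ∀ y ∈ T, u * y = 0 := by
    rintro u ⟨a, d, hd, rfl⟩ y hy
    induction hy using Submodule.span_induction with
    | mem v hv =>
      rcases hv with ⟨a', d', hd', rfl⟩
      have hda : d * a' ∈ D := by
        have h3 := D.smul_mem (op a') hd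
        rwa [op_smul_eq_mul] at h3
      have : a * d * (a' * d') = a * ((d * a') * d') := by
        rw [mul_assoc, ← mul_assoc d a' d']
      rw [this, hD _ hda _ hd', mul_zero]
    | zero => rw [mul_zero]
    | add y z _ _ hy hz => rw [mul_add, hy, hz, add_zero]
    | smul c y _ hy =>
      rw [← op_unop c, op_smul_eq_mul, ← mul_assoc, hy, zero_mul]
  have hTT : ∀ x ∈ T, ∀ y ∈ T, x * y = 0 := by
    intro x hx
    induction hx using Submodule.span_induction with
    | mem u hu => exact hgen u hu
    | zero => intro y _; rw [zero_mul]
    | add x x' _ _ ihx ihx' => intro y hy; rw [add_mul, ihx y hy, ihx' y hy, add_zero]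
    | smul c x _ ih =>
      intro y hy
      have hcy : c.unop * y ∈ T := hTtwo c.unop y hy
      rw [← op_unop c, op_smul_eq_mul, mul_assoc]
      exact ih _ hcy
  have hTbot : T = ⊥ := hsp T hTtwo hTT
  have hDT : D ≤ T := fun d hd => Submodule.subset_span ⟨1, d, hd, (one_mul d).symm⟩
  exact eq_bot_iff.2 (hTbot ▸ hDT)

/-- Left multiplication by `c`, as a map of right `A`-modules. -/
def lmul (c : A) : A →ₗ[Aᵐᵒᵖ] A where
  toFun a := c * a
  map_add' := mul_add c
  map_smul' := by
    intro r a
    simp only [RingHom.id_apply]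
    rw [← op_unop r, op_smul_eq_mul, op_smul_eq_mul, mul_assoc]

lemma ess_comap_lmul {E : Submodule Aᵐᵒᵖ A} (hE : IsEssentialSubmodule E) (c : A) :
    IsEssentialSubmodule (E.comap (lmul c)) := by
  intro C hC hbot
  by_cases h : ∀ a ∈ C, c * a = 0
  · rcases (Submodule.ne_bot_iff C).1 hC with ⟨a, haC, ha0⟩
    apply ha0
    have hmem : a ∈ E.comap (lmul c) ⊓ C := by
      refine ⟨?_, haC⟩
      show c * a ∈ E
      rw [h a haC]; exact E.zero_mem
    rw [hbot] at hmem
    simpa using hmem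
  · push_neg at h
    obtain ⟨a, haC, hca⟩ := h
    have hmapne : E ⊓ C.map (lmul c) ≠ ⊥ := by
      apply hE
      intro hbot2
      apply hca
      have hmem : lmul c a ∈ C.map (lmul c) := Submodule.mem_map_of_mem haC
      rw [hbot2] at hmem
      exact (by simpa using hmem : lmul c a = 0)
    rcases (Submodule.ne_bot_iff _).1 hmapne with ⟨y, hy, hy0⟩
    rcases Submodule.mem_inf.1 hy with ⟨hyE, hymap⟩
    rcases Submodule.mem_map.1 hymap with ⟨a', ha'C, rfl⟩
    have ha'mem : a' ∈ E.comap (lmul c) ⊓ C := ⟨hyE, ha'C⟩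
    rw [hbot] at ha'mem
    apply hy0
    have : a' = 0 := by simpa using ha'mem
    rw [this, map_zero]

/-- The singular submodule of `A` as a right module over itself. -/
def Zsing (A : Type u) [Ring A] : Submodule Aᵐᵒᵖ A where
  carrier := {x : A | IsEssentialSubmodule (rAnn A x)}
  zero_mem' := by
    have h0 : (rAnn A (0 : A)) = ⊤ := by
      ext a
      simp [mem_rAnn]
    show IsEssentialSubmodule (rAnn A (0 : A))
    rw [h0]
    exact ess_top
  add_mem' := by
    intro x y hx hy
    refine ess_mono ?_ (ess_inf hx hy)
    intro a ha
    rcases Submodule.mem_inf.1 ha with ⟨h1, h2⟩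
    rw [mem_rAnn] at h1 h2 ⊢
    rw [add_mul, h1, h2, add_zero]
  smul_mem' := by
    intro c x hx
    refine ess_mono ?_ (ess_comap_lmul hx c.unop)
    intro a ha
    have h1 : x * (c.unop * a) = 0 := mem_rAnn.1 ha
    rw [mem_rAnn]
    have h2 : (c • x : A) = x * c.unop := rfl
    rw [h2, mul_assoc, h1]

lemma mem_Zsing {x : A} : x ∈ Zsing A ↔ IsEssentialSubmodule (rAnn A x) := Iff.rfl

lemma isTwoSided_Zsing : IsTwoSided A (Zsing A) := by
  intro a x hx
  rw [mem_Zsing] at hx ⊢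
  refine ess_mono ?_ hx
  intro b hb
  rw [mem_rAnn] at hb ⊢
  rw [mul_assoc, hb, mul_zero]

lemma nonsingular_of_ssp (hssp : RightStronglySemiprime A) : IsNonsingular A A := by
  classical
  have hsp := semiprime_of_ssp hssp
  set Z := Zsing A with hZ
  have hZtwo : IsTwoSided A Z := isTwoSided_Zsing
  set L := lAnn Z hZtwo with hL
  set J := Z ⊔ L with hJ
  obtain ⟨S, hSsub, hSann⟩ :=
    hssp J (isTwoSided_sup hZtwo (isTwoSided_lAnn _ _)) (ess_sup_lAnn _ _)
  have hch : ∀ s : A, ∃ z : A, z ∈ Z ∧ (s ∈ J → s - z ∈ L) := by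
    intro s
    by_cases hs : s ∈ J
    · rcases Submodule.mem_sup.1 hs with ⟨z, hz, b, hb, rfl⟩
      exact ⟨z, hz, fun _ => by simpa using hb⟩
    · exact ⟨0, Z.zero_mem, fun h => absurd h hs⟩
  choose zf hzfZ hzfL using hch
  set E := S.inf (fun s => rAnn A (zf s)) with hE
  have hEess : IsEssentialSubmodule E :=
    ess_finsetInf S _ (fun s _ => hzfZ s)
  have hEZ : ∀ e ∈ E, ∀ z ∈ Z, e * z = 0 := by
    intro e he z hz
    apply hSann
    intro s hs
    have hsJ : s ∈ J := hSsub (Finset.mem_coe.2 hs)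
    have hle : E ≤ rAnn A (zf s) := Finset.inf_le hs
    have h1 : zf s * e = 0 := mem_rAnn.1 (hle he)
    have h2 : (s - zf s) * (e * z) = 0 :=
      mem_lAnn.1 (hzfL s hsJ) _ (hZtwo e z hz)
    have hdec : s = zf s + (s - zf s) := by abel
    calc s * (e * z) = (zf s + (s - zf s)) * (e * z) := by rw [← hdec]
      _ = zf s * (e * z) + (s - zf s) * (e * z) := add_mul _ _ _
      _ = (zf s * e) * z + 0 := by rw [← mul_assoc, h2]
      _ = 0 := by rw [h1, zero_mul, add_zero]
  have hDbot : Z ⊓ E = ⊥ := by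
    refine nil_right_ideal_bot hsp _ ?_
    intro x hx y hy
    exact hEZ x hx.2 y hy.1
  have hZbot : Z = ⊥ := by
    by_contra hne
    exact hEess Z hne (by rw [inf_comm]; exact hDbot)
  intro x hx
  have hxZ : x ∈ Z := hx
  rw [hZbot] at hxZ
  simpa using hxZ

lemma noinf_of_ssp (hssp : RightStronglySemiprime A) : NoInfiniteIdealDirectSum A := by
  classical
  rintro ⟨I, htwo, hne, hdisj⟩
  set B := (⨆ n, I n : Submodule Aᵐᵒᵖ A) with hB
  have hBtwo : IsTwoSided A B := by
    intro a x hx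
    refine Submodule.iSup_induction I (motive := fun x => a * x ∈ B) hx
      (fun n x hx => ?_) ?_ (fun x y hx hy => ?_)
    · exact Submodule.mem_iSup_of_mem n (htwo n a x hx)
    · show a * 0 ∈ B
      rw [mul_zero]; exact B.zero_mem
    · show a * (x + y) ∈ B
      rw [mul_add]; exact B.add_mem hx hy
  set L := lAnn B hBtwo with hL
  set J := B ⊔ L with hJ
  obtain ⟨S, hSsub, hSann⟩ :=
    hssp J (isTwoSided_sup hBtwo (isTwoSided_lAnn _ _)) (ess_sup_lAnn _ _)
  have hch : ∀ s : A, ∃ (t : A) (F : Finset ℕ),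
      t ∈ (⨆ n ∈ F, I n) ∧ (s ∈ J → s - t ∈ L) := by
    intro s
    by_cases hs : s ∈ J
    · rcases Submodule.mem_sup.1 hs with ⟨t, ht, b, hb, rfl⟩
      rcases Submodule.mem_iSup_iff_exists_finset.1 ht with ⟨F, hF⟩
      exact ⟨t, F, hF, fun _ => by simpa using hb⟩
    · exact ⟨0, ∅, Submodule.zero_mem _, fun h => absurd h hs⟩
  choose tf Ff htf hbf using hch
  set F : Finset ℕ := S.biUnion Ff with hF
  set N : ℕ := F.sup id + 1 with hN
  have hNnot : ∀ n ∈ F, n ≠ N := by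
    intro n hn hcontra
    have h1 : n ≤ F.sup id := Finset.le_sup (f := id) hn
    omega
  have hIN : I N = ⊥ := by
    rw [Submodule.eq_bot_iff]
    intro x hx
    apply hSann
    intro s hs
    have hsJ : s ∈ J := hSsub (Finset.mem_coe.2 hs)
    have hxB : x ∈ B := Submodule.mem_iSup_of_mem N hx
    have h2 : (s - tf s) * x = 0 := mem_lAnn.1 (hbf s hsJ) x hxB
    have hle : (⨆ n ∈ Ff s, I n) ≤ ⨆ m ∈ {m : ℕ | m ≠ N}, I m := by
      refine iSup₂_le fun n hn => ?_
      have hnN : n ≠ N := hNnot n (Finset.mem_biUnion.2 ⟨s, hs, hn⟩)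
      exact le_iSup₂_of_le n hnN le_rfl
    have htmem : tf s * x ∈ I N ⊓ (⨆ m ∈ {m : ℕ | m ≠ N}, I m) := by
      constructor
      · exact htwo N (tf s) x hx
      · have h3 := (⨆ m ∈ {m : ℕ | m ≠ N}, I m).smul_mem (op x) (hle (htf s))
        rwa [op_smul_eq_mul] at h3
    rw [hdisj N] at htmem
    have h1 : tf s * x = 0 := by simpa using htmem
    have hdec : s = tf s + (s - tf s) := by abel
    calc s * x = (tf s + (s - tf s)) * x := by rw [← hdec]
      _ = tf s * x + (s - tf s) * x := add_mul _ _ _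
      _ = 0 := by rw [h1, h2, add_zero]
  exact hne N hIN

end Lemma26

/-- **Lemma 2.6.** If `A` is a right strongly semiprime ring, then `A` is a right
non-singular semiprime ring which does not contain an infinite direct sum of nonzero
two-sided ideals. -/
theorem stronglySemiprime_imp_nonsingular_semiprime_noInfiniteIdealSum
    (A : Type u) [Ring A] (hssp : RightStronglySemiprime A) :
    IsNonsingular A A ∧ SemiprimeRing A ∧ NoInfiniteIdealDirectSum A :=
  ⟨nonsingular_of_ssp hssp, semiprime_of_ssp hssp, noinf_of_ssp hssp⟩

end TugPaper
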